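/- Let φ = (√5 − 1)/2. For every real p with φ ≤ p < 1 and every natural number n, one has the closed-form expression v_n(p) = n − Σ_{k=1}^{n} [(1−p)^k · Π_{j=k+1}^{n} (1 − p^j)]. -/

import Mathlib

/-- `v p n` is the optimal expected number of heads in the coin game with `n` coins,
each landing heads with probability `p`. -/
noncomputable def v (p : ℝ) : ℕ → ℝ
  | 0 => 0
  | n + 1 =>
      ((n : ℝ) + 1) * p ^ (n + 1) + v p n * (1 - p) ^ (n + 1) +
        ∑ j ∈ (Finset.Icc 1 n).attach,
          (((n + 1).choose j.1 : ℕ) : ℝ) * p ^ (j.1 : ℕ) * (1 - p) ^ (n + 1 - j.1) *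
            ((Finset.Icc 1 j.1).attach.sup'
              (Finset.attach_nonempty_iff.mpr
                (Finset.nonempty_Icc.mpr (Finset.mem_Icc.mp j.2).1))
              (fun i => v p (n + 1 - i.1) + (i.1 : ℝ)))
decreasing_by
  · omega
  · have h := (Finset.mem_Icc.mp i.2).1
    omega

/-- `s p n = v p n - n + 1 - p`. -/
noncomputable def s (p : ℝ) (n : ℕ) : ℝ := v p n - n + 1 - p

/-- Auxiliary sum appearing in the closed form. -/
noncomputable def S (p : ℝ) (n : ℕ) : ℝ :=
  ∑ k ∈ Finset.Icc 1 n, (1 - p) ^ k * ∏ j ∈ Finset.Icc (k + 1) n, (1 - p ^ j)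

lemma S_zero (p : ℝ) : S p 0 = 0 := by simp [S]

lemma Icc_succ_right' (a b : ℕ) (h : a ≤ b + 1) :
    Finset.Icc a (b + 1) = insert (b + 1) (Finset.Icc a b) := by
  ext x
  simp only [Finset.mem_Icc, Finset.mem_insert]
  omega

lemma S_succ (p : ℝ) (n : ℕ) :
    S p (n + 1) = S p n * (1 - p ^ (n + 1)) + (1 - p) ^ (n + 1) := by
  unfold S
  rw [Icc_succ_right' 1 n (by omega), Finset.sum_insert (by simp)]
  have hstep : ∀ k ∈ Finset.Icc 1 n,
      (1 - p) ^ k * ∏ j ∈ Finset.Icc (k + 1) (n + 1), (1 - p ^ j)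
        = ((1 - p) ^ k * ∏ j ∈ Finset.Icc (k + 1) n, (1 - p ^ j)) * (1 - p ^ (n + 1)) := by
    intro k hk
    have hk' := (Finset.mem_Icc.mp hk).2
    rw [Icc_succ_right' (k + 1) n (by omega), Finset.prod_insert (by simp)]
    ring
  rw [Finset.sum_congr rfl hstep, ← Finset.sum_mul]
  rw [show Finset.Icc (n + 1 + 1) (n + 1) = ∅ from Finset.Icc_eq_empty (by omega)]
  simp [add_comm]

lemma S_nonneg (p : ℝ) (hp0 : 0 ≤ p) (hp2 : p ≤ 1) (n : ℕ) : 0 ≤ S p n := by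
  apply Finset.sum_nonneg
  intro k _
  apply mul_nonneg (pow_nonneg (by linarith) k)
  apply Finset.prod_nonneg
  intro j _
  have := pow_le_one₀ hp0 hp2 (n := j)
  linarith

lemma S_key (p : ℝ) (hp0 : 0 ≤ p) (hsq : 1 - p ≤ p ^ 2) (hp2 : p ≤ 1) :
    ∀ n, 1 ≤ n → (1 - p) ^ (n + 1) ≤ p ^ (n + 1) * S p n := by
  intro n hn
  induction n with
  | zero => omega
  | succ m ih =>
    rcases Nat.eq_or_lt_of_le hn with h1 | h1
    · -- m + 1 = 1, i.e. m = 0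
      have hm : m = 0 := by omega
      subst hm
      have hS1 : S p 1 = 1 - p := by
        simp [S, show Finset.Icc 2 1 = (∅ : Finset ℕ) from Finset.Icc_eq_empty (by omega)]
      rw [hS1]
      have e : (1 - p) ^ (0 + 1 + 1) = (1 - p) * (1 - p) := by ring
      have e' : p ^ (0 + 1 + 1) * (1 - p) = p ^ 2 * (1 - p) := by ring
      rw [e, e']
      nlinarith [mul_nonneg (sub_nonneg.mpr hsq) (sub_nonneg.mpr hp2)]
    · have hm : 1 ≤ m := by omega
      have hA := ih hm
      have hq : (0:ℝ) ≤ 1 - p := by linarith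
      have hB : 0 ≤ 1 - p ^ (m + 1) := by
        have := pow_le_one₀ hp0 hp2 (n := m + 1); linarith
      have hhalf : 1 / 2 ≤ p := by nlinarith
      rw [S_succ]
      have h1 : p * (1 - p ^ (m + 1)) * (1 - p) ^ (m + 1)
          ≤ p * (1 - p ^ (m + 1)) * (p ^ (m + 1) * S p m) :=
        mul_le_mul_of_nonneg_left hA (mul_nonneg hp0 hB)
      have h2 : (1 - p) * (1 - p) ^ (m + 1) ≤ p * (1 - p) ^ (m + 1) :=
        mul_le_mul_of_nonneg_right (by linarith) (pow_nonneg hq _)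
      have e1 : (1 - p) ^ (m + 1 + 1) = (1 - p) * (1 - p) ^ (m + 1) := by ring
      have e2 : p ^ (m + 1 + 1) * (S p m * (1 - p ^ (m + 1)) + (1 - p) ^ (m + 1))
          = p * (1 - p ^ (m + 1)) * (p ^ (m + 1) * S p m)
            + p * p ^ (m + 1) * (1 - p) ^ (m + 1) := by ring
      have h3 : p * (1 - p ^ (m + 1)) * (1 - p) ^ (m + 1)
          + p * p ^ (m + 1) * (1 - p) ^ (m + 1) = p * (1 - p) ^ (m + 1) := by ring
      rw [e1, e2]
      linarith [h1, h2, h3]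

lemma S_anti (p : ℝ) (hp0 : 0 ≤ p) (hsq : 1 - p ≤ p ^ 2) (hp2 : p ≤ 1)
    {a b : ℕ} (ha : 1 ≤ a) (hab : a ≤ b) : S p b ≤ S p a := by
  induction b, hab using Nat.le_induction with
  | base => exact le_refl _
  | succ m hm ih =>
    have hm1 : 1 ≤ m := le_trans ha hm
    have hk := S_key p hp0 hsq hp2 m hm1
    have he : S p m * (1 - p ^ (m + 1)) = S p m - p ^ (m + 1) * S p m := by ring
    rw [S_succ, he]
    linarith [ih]

lemma binom_sum (p : ℝ) (m : ℕ) :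
    ∑ j ∈ Finset.Icc 1 m, (((m + 1).choose j : ℕ) : ℝ) * p ^ j * (1 - p) ^ (m + 1 - j)
      = 1 - p ^ (m + 1) - (1 - p) ^ (m + 1) := by
  have h := add_pow p (1 - p) (m + 1)
  rw [show p + (1 - p) = (1 : ℝ) by ring, one_pow, Finset.sum_range_succ,
      Finset.sum_range_succ'] at h
  simp only [Nat.choose_self, Nat.choose_zero_right, Nat.cast_one, pow_zero,
    Nat.sub_self, Nat.sub_zero, mul_one, one_mul] at h
  rw [← Finset.Ico_add_one_right_eq_Icc, Finset.sum_Ico_eq_sum_range]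
  simp only [Nat.add_sub_cancel]
  have hc : ∑ i ∈ Finset.range m,
      (((m + 1).choose (1 + i) : ℕ) : ℝ) * p ^ (1 + i) * (1 - p) ^ (m + 1 - (1 + i))
      = ∑ i ∈ Finset.range m,
        p ^ (i + 1) * (1 - p) ^ (m + 1 - (i + 1)) * (((m + 1).choose (i + 1) : ℕ) : ℝ) := by
    apply Finset.sum_congr rfl
    intro i hi
    rw [show 1 + i = i + 1 from by omega]
    ring
  rw [hc]
  linarith [h]

lemma vS (p : ℝ) (hp0 : 0 ≤ p) (hsq : 1 - p ≤ p ^ 2) (hp2 : p ≤ 1) :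
    ∀ n, v p n = (n : ℝ) - S p n := by
  intro n
  induction n using Nat.strong_induction_on with
  | _ n ih =>
    match n with
    | 0 => simp [v, S_zero]
    | (m + 1) =>
      rw [v]
      have key : ∀ (j : {x // x ∈ Finset.Icc 1 m})
          (H : ((Finset.Icc 1 (j.1 : ℕ)).attach).Nonempty),
          (Finset.Icc 1 (j.1 : ℕ)).attach.sup' H
            (fun i => v p (m + 1 - (i.1 : ℕ)) + ((i.1 : ℕ) : ℝ)) = v p m + 1 := by
        intro j H
        obtain ⟨hj1, hj2⟩ := Finset.mem_Icc.mp j.2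
        apply le_antisymm
        · apply Finset.sup'_le
          intro i _
          obtain ⟨hi1, hi2⟩ := Finset.mem_Icc.mp i.2
          have hle : (i.1 : ℕ) ≤ m := le_trans hi2 hj2
          rw [ih (m + 1 - (i.1 : ℕ)) (by omega), ih m (by omega)]
          have hcast : ((m + 1 - (i.1 : ℕ) : ℕ) : ℝ) = (m : ℝ) + 1 - ((i.1 : ℕ) : ℝ) := by
            have : ((i.1 : ℕ) : ℝ) ≤ (m : ℝ) + 1 := by exact_mod_cast by omega
            push_cast [Nat.cast_sub (by omega : (i.1 : ℕ) ≤ m + 1)]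
            ring
          rw [hcast]
          have hanti := S_anti p hp0 hsq hp2
            (a := m + 1 - (i.1 : ℕ)) (b := m) (by omega) (by omega)
          linarith
        · have h1 : (1 : ℕ) ∈ Finset.Icc 1 (j.1 : ℕ) := Finset.mem_Icc.mpr ⟨le_refl 1, hj1⟩
          have hle := Finset.le_sup'
            (fun i : {x // x ∈ Finset.Icc 1 (j.1 : ℕ)} =>
              v p (m + 1 - (i.1 : ℕ)) + ((i.1 : ℕ) : ℝ))
            (Finset.mem_attach _ (⟨1, h1⟩ : {x // x ∈ Finset.Icc 1 (j.1 : ℕ)}))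
          simp only [Nat.add_sub_cancel, Nat.cast_one] at hle
          exact hle
      simp only [key]
      rw [Finset.sum_attach (Finset.Icc 1 m)
        (fun k => (((m + 1).choose k : ℕ) : ℝ) * p ^ k * (1 - p) ^ (m + 1 - k) * (v p m + 1))]
      rw [← Finset.sum_mul, binom_sum, ih m (by omega), S_succ]
      push_cast
      ring

theorem coin_game_closed_form (p : ℝ) (hp1 : (Real.sqrt 5 - 1) / 2 ≤ p) (hp2 : p < 1)
    (n : ℕ) :
    v p n = (n : ℝ) -
      ∑ k ∈ Finset.Icc 1 n, (1 - p) ^ k * ∏ j ∈ Finset.Icc (k + 1) n, (1 - p ^ j) := by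
  have h5 : Real.sqrt 5 ^ 2 = 5 := Real.sq_sqrt (by norm_num)
  have h5n : (0 : ℝ) ≤ Real.sqrt 5 := Real.sqrt_nonneg 5
  have h52 : (2 : ℝ) ≤ Real.sqrt 5 := by nlinarith
  have hp0 : 0 ≤ p := by nlinarith
  have hsq : 1 - p ≤ p ^ 2 := by nlinarith
  exact vS p hp0 hsq (le_of_lt hp2) n
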